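/- Let G be an abelian group, H ≤ G a subgroup of finite index, k a field, and A a commutative Noetherian G-graded k-algebra. Then the Veronese subalgebra B := A^H = ⊕_{g∈H} A_g is a Noetherian ring, and A is a finitely generated B-module. -/

import Mathlib

set_option synthInstance.maxHeartbeats 1000000
set_option maxHeartbeats 1000000

open DirectSum

namespace VeroneseAux

variable {G : Type} [AddCommGroup G] [DecidableEq G]
  {k : Type} [Field k] {A : Type} [CommRing A] [Algebra k A]
  (𝒜 : G → Submodule k A) [GradedAlgebra 𝒜] (H : AddSubgroup G)

open Classical in
/-- Projection onto the components whose degree lies in the coset `c`. -/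
noncomputable def proj (c : G ⧸ H) : A →+ A where
  toFun a := (DirectSum.decompose 𝒜).symm
    (DFinsupp.filter (fun g : G => ((g : G ⧸ H) = c)) (DirectSum.decompose 𝒜 a))
  map_zero' := by
    rw [DirectSum.decompose_zero, DFinsupp.filter_zero, DirectSum.decompose_symm_zero]
  map_add' a b := by
    rw [DirectSum.decompose_add, DFinsupp.filter_add, DirectSum.decompose_symm_add]

open Classical in
lemma decompose_proj (c : G ⧸ H) (a : A) :
    DirectSum.decompose 𝒜 (proj 𝒜 H c a) =
      DFinsupp.filter (fun g : G => ((g : G ⧸ H) = c)) (DirectSum.decompose 𝒜 a) :=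
  Equiv.apply_symm_apply _ _

lemma proj_component_eq {c : G ⧸ H} {g : G} (hg : (g : G ⧸ H) = c) (a : A) :
    DirectSum.decompose 𝒜 (proj 𝒜 H c a) g = DirectSum.decompose 𝒜 a g := by
  classical
  rw [decompose_proj, DFinsupp.filter_apply, if_pos hg]

lemma proj_component_ne {c : G ⧸ H} {g : G} (hg : (g : G ⧸ H) ≠ c) (a : A) :
    DirectSum.decompose 𝒜 (proj 𝒜 H c a) g = 0 := by
  classical
  rw [decompose_proj, DFinsupp.filter_apply, if_neg hg]

lemma sum_proj [Fintype (G ⧸ H)] (a : A) :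
    ∑ c : G ⧸ H, proj 𝒜 H c a = a := by
  apply (DirectSum.decompose 𝒜).injective
  rw [DirectSum.decompose_sum]
  refine DFinsupp.ext fun g => ?_
  rw [DFinsupp.finset_sum_apply]
  rw [Finset.sum_eq_single ((g : G ⧸ H))]
  · exact proj_component_eq 𝒜 H rfl a
  · intro c _ hc
    exact proj_component_ne 𝒜 H (fun h => hc h.symm) a
  · intro h; exact absurd (Finset.mem_univ _) h

lemma decompose_mul_piece {c d : G ⧸ H} {x y : A}
    (hx : ∀ g : G, (g : G ⧸ H) ≠ c → (DirectSum.decompose 𝒜 x g : A) = 0)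
    (hy : ∀ g : G, (g : G ⧸ H) ≠ d → (DirectSum.decompose 𝒜 y g : A) = 0)
    {g : G} (hg : (g : G ⧸ H) ≠ c + d) :
    (DirectSum.decompose 𝒜 (x * y) g : A) = 0 := by
  classical
  rw [DirectSum.decompose_mul, DirectSum.coe_mul_apply]
  apply Finset.sum_eq_zero
  rintro ⟨i, j⟩ hij
  simp only [Finset.mem_filter, Finset.mem_product] at hij
  obtain ⟨-, hijg⟩ := hij
  by_cases hic : (i : G ⧸ H) = c
  · have hjd : (j : G ⧸ H) ≠ d := by
      intro hjd
      apply hg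
      rw [← hijg, QuotientAddGroup.mk_add, hic, hjd]
    rw [hy j hjd, mul_zero]
  · rw [hx i hic, zero_mul]

lemma proj_eq_self {c : G ⧸ H} {z : A}
    (hz : ∀ g : G, (g : G ⧸ H) ≠ c → (DirectSum.decompose 𝒜 z g : A) = 0) :
    proj 𝒜 H c z = z := by
  apply (DirectSum.decompose 𝒜).injective
  refine DFinsupp.ext fun g => ?_
  by_cases hg : (g : G ⧸ H) = c
  · rw [proj_component_eq 𝒜 H hg]
  · rw [proj_component_ne 𝒜 H hg]
    exact (ZeroMemClass.coe_eq_zero.mp (hz g hg)).symm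

lemma proj_eq_zero {c e : G ⧸ H} (hce : e ≠ c) {z : A}
    (hz : ∀ g : G, (g : G ⧸ H) ≠ e → (DirectSum.decompose 𝒜 z g : A) = 0) :
    proj 𝒜 H c z = 0 := by
  apply (DirectSum.decompose 𝒜).injective
  rw [DirectSum.decompose_zero]
  refine DFinsupp.ext fun g => ?_
  by_cases hg : (g : G ⧸ H) = c
  · rw [proj_component_eq 𝒜 H hg]
    have : (g : G ⧸ H) ≠ e := fun h => hce (h ▸ hg)
    simp [ZeroMemClass.coe_eq_zero.mp (hz g this)]
  · rw [proj_component_ne 𝒜 H hg]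
    simp

lemma coe_proj_component_ne {c : G ⧸ H} {g : G} (hg : (g : G ⧸ H) ≠ c) (a : A) :
    (DirectSum.decompose 𝒜 (proj 𝒜 H c a) g : A) = 0 := by
  rw [proj_component_ne 𝒜 H hg a, ZeroMemClass.coe_zero]

lemma proj_mul [Fintype (G ⧸ H)] {c : G ⧸ H} (x : A) {y : A}
    (hy : ∀ g : G, (g : G ⧸ H) ≠ c → (DirectSum.decompose 𝒜 y g : A) = 0) :
    proj 𝒜 H c (x * y) = proj 𝒜 H 0 x * y := by
  conv_lhs => rw [← sum_proj 𝒜 H x]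
  rw [Finset.sum_mul, map_sum]
  rw [Finset.sum_eq_single (0 : G ⧸ H)]
  · exact proj_eq_self 𝒜 H (fun g hg =>
      decompose_mul_piece 𝒜 H (fun g' hg' => coe_proj_component_ne 𝒜 H hg' x) hy
        (by rwa [zero_add]))
  · intro d _ hd
    refine proj_eq_zero 𝒜 H (e := d + c) (fun h => hd ?_) (fun g hg =>
      decompose_mul_piece 𝒜 H (fun g' hg' => coe_proj_component_ne 𝒜 H hg' x) hy hg)
    apply add_right_cancel (b := c)
    rwa [zero_add]
  · intro h; exact absurd (Finset.mem_univ _) h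

end VeroneseAux

section Main

open VeroneseAux

variable {G : Type} [AddCommGroup G] [DecidableEq G]
  {k : Type} [Field k] {A : Type} [CommRing A] [Algebra k A]
  (𝒜 : G → Submodule k A) [GradedAlgebra 𝒜] (H : AddSubgroup G)
  (B : Subalgebra k A)
  (hB : ∀ a : A, a ∈ B ↔ ∀ g : G, (g : G ⧸ H) ≠ 0 → (DirectSum.decompose 𝒜 a g : A) = 0)

lemma vsmul_def (b : ↥B) (a : A) : b • a = (b : A) * a := rfl

/-- The coset piece as a `B`-submodule of `A`. -/
def piece (c : G ⧸ H) : Submodule ↥B A where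
  carrier := {a | ∀ g : G, (g : G ⧸ H) ≠ c → (DirectSum.decompose 𝒜 a g : A) = 0}
  add_mem' := by
    intro a b ha hb g hg
    rw [DirectSum.decompose_add, DirectSum.add_apply, AddMemClass.coe_add,
      ha g hg, hb g hg, add_zero]
  zero_mem' := by
    intro g hg
    rw [DirectSum.decompose_zero, DirectSum.zero_apply, ZeroMemClass.coe_zero]
  smul_mem' := by
    intro b a ha g hg
    rw [vsmul_def]
    exact decompose_mul_piece 𝒜 H ((hB b).mp b.2) ha (by rwa [zero_add])

lemma proj_mem_span (c : G ⧸ H) [Fintype (G ⧸ H)]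
    {S : Set A} (hS : S ⊆ ↑(piece 𝒜 H B hB c))
    {x : A} (hx : x ∈ Ideal.span S) :
    proj 𝒜 H c x ∈ Submodule.span ↥B S := by
  obtain ⟨f, hfs, rfl⟩ := Submodule.mem_span_set.mp hx
  rw [Finsupp.sum, map_sum]
  apply Submodule.sum_mem
  intro a haf
  have ha : a ∈ S := hfs haf
  rw [smul_eq_mul, proj_mul 𝒜 H (f a) (hS ha)]
  have hb : proj 𝒜 H 0 (f a) ∈ B :=
    (hB _).mpr (fun g hg => coe_proj_component_ne 𝒜 H hg (f a))
  have : proj 𝒜 H 0 (f a) * a = (⟨_, hb⟩ : ↥B) • a := rfl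
  rw [this]
  exact Submodule.smul_mem _ _ (Submodule.subset_span ha)

lemma isNoetherian_piece [IsNoetherianRing A] [Fintype (G ⧸ H)] (c : G ⧸ H) :
    IsNoetherian ↥B ↥(piece 𝒜 H B hB c) := by
  rw [isNoetherian_iff']
  haveI : IsNoetherian A A := isNoetherianRing_iff.mp ‹IsNoetherianRing A›
  haveI : WellFoundedGT (Ideal A) := inferInstanceAs (WellFoundedGT (Submodule A A))
  refine StrictMono.wellFoundedGT
    (f := fun N : Submodule ↥B ↥(piece 𝒜 H B hB c) =>
      Ideal.span ((N.map (piece 𝒜 H B hB c).subtype : Submodule ↥B A) : Set A)) ?_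
  have hle : ∀ N N' : Submodule ↥B ↥(piece 𝒜 H B hB c),
      Ideal.span ((N.map (piece 𝒜 H B hB c).subtype : Submodule ↥B A) : Set A) ≤
        Ideal.span ((N'.map (piece 𝒜 H B hB c).subtype : Submodule ↥B A) : Set A) →
      N ≤ N' := by
    intro N N' h n hn
    have hmem : (n : A) ∈ Ideal.span
        ((N'.map (piece 𝒜 H B hB c).subtype : Submodule ↥B A) : Set A) :=
      h (Ideal.subset_span ⟨n, hn, rfl⟩)
    have hS : ((N'.map (piece 𝒜 H B hB c).subtype : Submodule ↥B A) : Set A) ⊆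
        ↑(piece 𝒜 H B hB c) := by
      rintro _ ⟨m, -, rfl⟩; exact m.2
    have := proj_mem_span 𝒜 H B hB c hS hmem
    rw [Submodule.span_eq, proj_eq_self 𝒜 H n.2] at this
    obtain ⟨m, hm, hmn⟩ := this
    rwa [show m = n from Subtype.ext hmn] at hm
  intro N N' hNN'
  refine lt_of_le_not_ge
    (Ideal.span_mono (Submodule.map_mono hNN'.le)) (fun h => ?_)
  exact hNN'.not_ge (hle N' N h)

include 𝒜 H hB in
lemma isNoetherian_total [IsNoetherianRing A] [Fintype (G ⧸ H)] :
    IsNoetherian ↥B A := by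
  have htop : (⊤ : Submodule ↥B A) = ⨆ c : G ⧸ H, piece 𝒜 H B hB c := by
    refine le_antisymm (fun a _ => ?_) le_top
    rw [← sum_proj 𝒜 H a]
    apply Submodule.sum_mem
    intro c _
    exact Submodule.mem_iSup_of_mem c
      (fun g hg => coe_proj_component_ne 𝒜 H hg a)
  haveI : ∀ c : G ⧸ H, IsNoetherian ↥B ↥(piece 𝒜 H B hB c) :=
    fun c => isNoetherian_piece 𝒜 H B hB c
  rw [← isNoetherian_top_iff, htop]
  infer_instance

end Main

/-- Let `G` be an abelian group, `H ≤ G` of finite index, `k` a field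
and `A` a commutative Noetherian `G`-graded `k`-algebra.  Then the Veronese subalgebra
`B = A^H = ⊕_{g ∈ H} A_g` is Noetherian and `A` is a finitely generated `B`-module. -/
theorem veronese_noetherian_and_finite
    {G : Type} [AddCommGroup G] [DecidableEq G]
    (H : AddSubgroup G) (hH : H.index ≠ 0)
    (k : Type) [Field k] (A : Type) [CommRing A] [Algebra k A] [IsNoetherianRing A]
    (𝒜 : G → Submodule k A) [GradedAlgebra 𝒜]
    (B : Subalgebra k A)
    (hB : ∀ a : A, a ∈ B ↔ ∀ g : G, g ∉ H → (DirectSum.decompose 𝒜 a g : A) = 0) :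
    IsNoetherianRing ↥B ∧ Module.Finite ↥B A := by
  haveI : Finite (G ⧸ H) := (Nat.card_ne_zero.mp hH).2
  haveI := Fintype.ofFinite (G ⧸ H)
  have hB' : ∀ a : A, a ∈ B ↔
      ∀ g : G, (g : G ⧸ H) ≠ 0 → (DirectSum.decompose 𝒜 a g : A) = 0 := by
    intro a
    rw [hB a]
    constructor
    · intro h g hg
      exact h g (fun hgH => hg ((QuotientAddGroup.eq_zero_iff g).mpr hgH))
    · intro h g hg
      exact h g (fun hq => hg ((QuotientAddGroup.eq_zero_iff g).mp hq))
  haveI hNoe : IsNoetherian ↥B A := isNoetherian_total 𝒜 H B hB'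
  constructor
  · rw [isNoetherianRing_iff]
    refine isNoetherian_of_injective (Algebra.linearMap ↥B A) ?_
    intro x y hxy
    exact Subtype.ext hxy
  · exact ⟨IsNoetherian.noetherian ⊤⟩
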